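/- Let τ be a real number with 2 < τ < 5/2. Then there exist a natural number n and a real β > 0 such that (1 + β)(τ − 2) < 1/(τ − 1/(f n)). -/

import Mathlib

open Real

/-- The sequence `f 0 = τ`, `f (n+1) = τ - 1 / f n` from the paper's recursion
`f^{(2)}(τ) = τ`, `f^{(k+1)}(τ) = τ - 1/f^{(k)}(τ)`. -/
noncomputable def fseq (τ : ℝ) : ℕ → ℝ
  | 0 => τ
  | n + 1 => τ - 1 / fseq τ n

/-- For `2 < τ < 5/2`, there exist a natural number `n` and a real `β > 0` such that
`(1 + β)(τ - 2) < 1 / (τ - 1 / f n)`: satisfiability of the hypothesis of the paper's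
weight-increasing-path theorem in the regime `τ < 5/2`. -/
theorem exists_step_parameters (τ : ℝ) (hτ2 : 2 < τ) (hτ52 : τ < 5 / 2) :
    ∃ (n : ℕ) (β : ℝ), 0 < β ∧ (1 + β) * (τ - 2) < 1 / (τ - 1 / fseq τ n) := by
  obtain ⟨a, ha1, ha2, haτ, hfixi⟩ :
      ∃ a : ℝ, 1 < a ∧ a < 2 ∧ a < τ ∧ τ - 1 / a = a := by
    have hs2 : Real.sqrt (τ^2 - 4) ^ 2 = τ^2 - 4 := Real.sq_sqrt (by nlinarith)
    have hs0 : 0 < Real.sqrt (τ^2 - 4) := Real.sqrt_pos.mpr (by nlinarith)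
    have hsτ : Real.sqrt (τ^2 - 4) < τ := by nlinarith
    refine ⟨(τ + Real.sqrt (τ^2 - 4)) / 2, by nlinarith, by nlinarith, by linarith, ?_⟩
    have h0 : (τ + Real.sqrt (τ^2 - 4)) / 2 ≠ 0 := by positivity
    field_simp
    nlinarith
  have ha0 : 0 < a := by linarith
  -- f stays above a
  have hgt : ∀ n, a < fseq τ n := by
    intro n
    induction n with
    | zero => simpa [fseq] using haτ
    | succ n ih =>
      have hfn0 : 0 < fseq τ n := lt_trans ha0 ih
      have : 1 / fseq τ n < 1 / a := one_div_lt_one_div_of_lt ha0 ih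
      calc a = τ - 1 / a := hfixi.symm
        _ < τ - 1 / fseq τ n := by linarith
        _ = fseq τ (n+1) := rfl
  -- one-step contraction
  have hstep : ∀ n, fseq τ (n+1) - a ≤ (fseq τ n - a) / (a * a) := by
    intro n
    have hfn := hgt n
    have hfn0 : 0 < fseq τ n := lt_trans ha0 hfn
    have h1 : fseq τ (n+1) - a = (fseq τ n - a) / (a * fseq τ n) := by
      have e1 : fseq τ (n+1) - a = 1 / a - 1 / fseq τ n := by
        have hτa : τ = a + 1 / a := by linarith
        show (τ - 1 / fseq τ n) - a = _
        rw [hτa]; ring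
      rw [e1, div_sub_div _ _ ha0.ne' hfn0.ne', one_mul, mul_one]
    rw [h1]
    apply div_le_div_of_nonneg_left (by linarith) (by positivity)
    nlinarith
  -- geometric decay
  have hgeo : ∀ n, fseq τ n - a ≤ (τ - a) * (1 / (a * a))^n := by
    intro n
    induction n with
    | zero => simp [fseq]
    | succ n ih =>
      have hden : (0:ℝ) < a * a := by positivity
      calc fseq τ (n+1) - a ≤ (fseq τ n - a) / (a * a) := hstep n
        _ ≤ ((τ - a) * (1 / (a * a))^n) / (a * a) := by gcongr
        _ = (τ - a) * (1 / (a * a))^(n+1) := by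
            rw [pow_succ]; field_simp
  -- a < 1/(τ-2)
  have hτ20 : 0 < τ - 2 := by linarith
  have had : a < 1 / (τ - 2) := by
    rw [lt_div_iff₀ hτ20]; nlinarith
  set m : ℝ := (a + 1 / (τ - 2)) / 2 with hm
  have ham : a < m := by simp only [hm]; linarith
  have hmd : m < 1 / (τ - 2) := by simp only [hm]; linarith
  have hm0 : 0 < m := lt_trans ha0 ham
  -- choose N
  have hr1 : 1 / (a * a) < 1 := by
    rw [div_lt_one (by positivity)]; nlinarith
  have hr0 : (0:ℝ) < 1 / (a * a) := by positivity
  obtain ⟨N, hN⟩ := exists_pow_lt_of_lt_one (show (0:ℝ) < (m - a) / (τ - a) by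
    apply div_pos (by linarith) (by linarith)) hr1
  have hfNm : fseq τ N < m := by
    have h1 := (lt_div_iff₀ (by linarith : (0:ℝ) < τ - a)).1 hN
    nlinarith [hgeo N]
  -- f(N+1) < m too
  have hfN1 : fseq τ (N+1) < m := by
    have h1 := hstep N
    have h2 := hgt N
    have h3 : (fseq τ N - a) / (a * a) < fseq τ N - a := by
      rw [div_lt_iff₀ (by positivity)]
      nlinarith [mul_pos (sub_pos.mpr h2) (show (0:ℝ) < a * a - 1 by nlinarith)]
    linarith
  have hfN10 : 0 < fseq τ (N+1) := lt_trans ha0 (hgt (N+1))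
  refine ⟨N, 1 / ((τ - 2) * m) - 1, ?_, ?_⟩
  · have : (τ - 2) * m < 1 := by
      have h := (lt_div_iff₀ hτ20).1 hmd
      nlinarith
    have h0 : 0 < (τ - 2) * m := by positivity
    rw [sub_pos, lt_div_iff₀ h0]
    linarith
  · have heq : (1 + (1 / ((τ - 2) * m) - 1)) * (τ - 2) = 1 / m := by
      field_simp
      ring
    rw [heq]
    have : τ - 1 / fseq τ N = fseq τ (N+1) := rfl
    rw [this]
    exact one_div_lt_one_div_of_lt hfN10 hfN1
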